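/- For partitions X and Y of Ω, the conditional entropy H(X|Y) := H(X∨Y) − H(Y) equals μ(ΔX \ ΔY), the sum of μ(S) over atoms crossed by X but not by Y. -/

import Mathlib

open Finset BigOperators

variable {Ω : Type*} [Fintype Ω] [DecidableEq Ω]

/-- Probability of a subset: `p(T) = Σ_{ω∈T} p(ω)`. -/
def pS (p : Ω → ℝ) (T : Finset Ω) : ℝ := ∑ ω ∈ T, p ω

/-- `p(T) log p(T)` (with `0 log 0 = 0` since `Real.log 0 = 0`). -/
noncomputable def plog (p : Ω → ℝ) (T : Finset Ω) : ℝ := pS p T * Real.log (pS p T)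

/-- The interior-loss measure of an atom `S`. -/
noncomputable def mu (p : Ω → ℝ) (S : Finset Ω) : ℝ :=
  ∑ T ∈ S.powerset.filter (· ≠ ∅), (-1 : ℝ) ^ (S.card - T.card) * plog p T

/-- `μ` of a set of atoms, extended additively. -/
noncomputable def muSet (p : Ω → ℝ) (R : Finset (Finset Ω)) : ℝ := ∑ S ∈ R, mu p S

/-- A partition `X` crosses an atom `S` when `S` meets at least two distinct parts. -/
def crossed (X : Finpartition (univ : Finset Ω)) (S : Finset Ω) : Prop :=
  ∃ P ∈ X.parts, ∃ Q ∈ X.parts, P ≠ Q ∧ (S ∩ P).Nonempty ∧ (S ∩ Q).Nonempty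

open scoped Classical in
/-- The content `ΔX`: set of atoms crossed by the partition `X`. -/
noncomputable def content (X : Finpartition (univ : Finset Ω)) : Finset (Finset Ω) :=
  (univ : Finset (Finset Ω)).filter (fun S => 2 ≤ S.card ∧ crossed X S)

/-- Shannon entropy of a partition. -/
noncomputable def Hent (p : Ω → ℝ) (X : Finpartition (univ : Finset Ω)) : ℝ :=
  - ∑ P ∈ X.parts, pS p P * Real.log (pS p P)

/-- `X` refines `Z`: every part of `X` lies in a part of `Z`. -/
def refines (X Z : Finpartition (univ : Finset Ω)) : Prop :=
  ∀ P ∈ X.parts, ∃ Q ∈ Z.parts, P ⊆ Q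

section aux
variable (p : Ω → ℝ)

set_option linter.unusedSectionVars false in
lemma plog_empty : plog p ∅ = 0 := by simp [plog, pS]

lemma mu_eq (S : Finset Ω) :
    mu p S = ∑ T ∈ S.powerset, (-1 : ℝ) ^ (S.card - T.card) * plog p T := by
  rw [mu, sum_filter]
  refine sum_congr rfl fun T _ => ?_
  by_cases h : T = ∅ <;> simp [h, plog_empty]

lemma sum_mu_powerset (S : Finset Ω) :
    ∑ T ∈ S.powerset, mu p T = plog p S := by
  simp_rw [mu_eq]
  rw [Finset.sum_comm' (s := S.powerset) (t := fun T => T.powerset)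
      (t' := S.powerset) (s' := fun U => S.powerset.filter (U ⊆ ·))
      (fun T U => by
        simp only [mem_powerset, mem_filter]
        constructor
        · rintro ⟨h1, h2⟩; exact ⟨⟨h1, h2⟩, h2.trans h1⟩
        · rintro ⟨⟨h1, h2⟩, h3⟩; exact ⟨h1, h2⟩)]
  have key : ∀ U ∈ S.powerset,
      ∑ T ∈ S.powerset.filter (U ⊆ ·), (-1 : ℝ) ^ (T.card - U.card) * plog p U
        = (if S \ U = ∅ then 1 else 0) * plog p U := by
    intro U hU
    rw [mem_powerset] at hU
    have : ∑ T ∈ S.powerset.filter (U ⊆ ·), (-1 : ℝ) ^ (T.card - U.card) * plog p U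
        = ∑ V ∈ (S \ U).powerset, (-1 : ℝ) ^ V.card * plog p U := by
      refine Finset.sum_nbij' (fun T => T \ U) (fun V => V ∪ U) ?_ ?_ ?_ ?_ ?_
      · intro T hT
        simp only [mem_filter, mem_powerset] at hT ⊢
        exact sdiff_subset_sdiff hT.1 Subset.rfl
      · intro V hV
        simp only [mem_powerset] at hV
        simp only [mem_filter, mem_powerset]
        exact ⟨union_subset (hV.trans (sdiff_subset)) hU, subset_union_right⟩
      · intro T hT
        simp only [mem_filter, mem_powerset] at hT
        exact sdiff_union_of_subset hT.2
      · intro V hV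
        simp only [mem_powerset] at hV
        have hd : Disjoint V U := disjoint_of_subset_left hV sdiff_disjoint
        show (V ∪ U) \ U = V
        rw [union_sdiff_right, sdiff_eq_self_of_disjoint hd]
      · intro T hT
        simp only [mem_filter, mem_powerset] at hT
        rw [card_sdiff_of_subset hT.2]
    rw [this, ← sum_mul]
    congr 1
    have hz := Finset.sum_powerset_neg_one_pow_card (x := S \ U)
    calc ∑ V ∈ (S \ U).powerset, (-1 : ℝ) ^ V.card
        = ((∑ V ∈ (S \ U).powerset, (-1 : ℤ) ^ V.card : ℤ) : ℝ) := by push_cast; rfl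
      _ = _ := by rw [hz]; split <;> norm_num
  rw [Finset.sum_congr rfl key]
  rw [Finset.sum_eq_single_of_mem S (mem_powerset_self S)]
  · simp
  · intro U hU hne
    rw [mem_powerset] at hU
    have : S \ U ≠ ∅ := fun h => hne ((sdiff_eq_empty_iff_subset.1 h).antisymm hU).symm
    simp [this]


lemma mem_content {X : Finpartition (univ : Finset Ω)} {S : Finset Ω} :
    S ∈ content X ↔ 2 ≤ S.card ∧ crossed X S := by
  classical
  simp [content]

lemma crossed_card {X : Finpartition (univ : Finset Ω)} {S : Finset Ω}
    (h : crossed X S) : 2 ≤ S.card := by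
  obtain ⟨P, hP, Q, hQ, hPQ, ⟨ω, hω⟩, ⟨ω', hω'⟩⟩ := h
  rw [mem_inter] at hω hω'
  have hd : Disjoint P Q := X.disjoint hP hQ hPQ
  refine Finset.one_lt_card.2 ⟨ω, hω.1, ω', hω'.1, fun h => ?_⟩
  exact Finset.disjoint_left.mp hd hω.2 (h ▸ hω'.2)

lemma not_crossed_iff {X : Finpartition (univ : Finset Ω)} {S : Finset Ω}
    (hS : S.Nonempty) : ¬ crossed X S ↔ ∃ P ∈ X.parts, S ⊆ P := by
  constructor
  · intro h
    obtain ⟨ω, hω⟩ := hS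
    obtain ⟨P, hP, hωP⟩ := X.exists_mem (mem_univ ω)
    refine ⟨P, hP, fun ω' hω' => ?_⟩
    by_contra hω'P
    obtain ⟨Q, hQ, hω'Q⟩ := X.exists_mem (mem_univ ω')
    exact h ⟨P, hP, Q, hQ, fun e => hω'P (e ▸ hω'Q),
      ⟨ω, mem_inter.2 ⟨hω, hωP⟩⟩, ⟨ω', mem_inter.2 ⟨hω', hω'Q⟩⟩⟩
  · rintro ⟨P0, hP0, hsub⟩ ⟨P, hP, Q, hQ, hPQ, ⟨x, hx⟩, ⟨y, hy⟩⟩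
    rw [mem_inter] at hx hy
    have e1 : P = P0 := X.eq_of_mem_parts hP hP0 hx.2 (hsub hx.1)
    have e2 : Q = P0 := X.eq_of_mem_parts hQ hP0 hy.2 (hsub hy.1)
    exact hPQ (e1.trans e2.symm)

lemma Hent_eq_muSet_content (hsum : ∑ ω, p ω = 1) (X : Finpartition (univ : Finset Ω)) :
    Hent p X = muSet p (content X) := by
  classical
  set A : Finset (Finset Ω) := (univ : Finset (Finset Ω)).filter (· ≠ ∅) with hA
  have hAmem : ∀ S : Finset Ω, S ∈ A ↔ S ≠ ∅ := by intro S; simp [hA]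
  have hmu_empty : mu p ∅ = 0 := by simp [mu, Finset.filter_singleton]
  have hsumA : ∑ S ∈ A, mu p S = 0 := by
    have h1 : ∑ T ∈ (univ : Finset Ω).powerset, mu p T = plog p univ :=
      sum_mu_powerset p univ
    have h2 : plog p univ = 0 := by simp [plog, pS, hsum]
    have h3 : (univ : Finset Ω).powerset = insert ∅ A := by
      ext S
      simp [hA, Finset.powerset_univ, eq_comm, or_comm, em]
    rw [h3, Finset.sum_insert (by simp [hAmem]), hmu_empty, zero_add] at h1
    rw [h1, h2]
  have hcsub : content X ⊆ A := by
    intro S hS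
    rw [mem_content] at hS
    rw [hAmem]
    rintro rfl
    simp at hS
  have hsplit : A \ content X = X.parts.biUnion (fun P => P.powerset.filter (· ≠ ∅)) := by
    ext S
    simp only [mem_sdiff, hAmem, mem_content, mem_biUnion, mem_filter, mem_powerset]
    constructor
    · rintro ⟨hne, hnc⟩
      have hnc' : ¬ crossed X S := fun h => hnc ⟨crossed_card h, h⟩
      obtain ⟨P, hP, hsub⟩ := (not_crossed_iff (nonempty_iff_ne_empty.2 hne)).1 hnc'
      exact ⟨P, hP, hsub, hne⟩
    · rintro ⟨P, hP, hsub, hne⟩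
      refine ⟨hne, fun ⟨_, hc⟩ => ?_⟩
      exact (not_crossed_iff (nonempty_iff_ne_empty.2 hne)).2 ⟨P, hP, hsub⟩ hc
  have hdisj : (↑X.parts : Set (Finset Ω)).PairwiseDisjoint
      (fun P => P.powerset.filter (· ≠ ∅)) := by
    intro P hP Q hQ hPQ
    simp only [Finset.disjoint_left, mem_filter, mem_powerset]
    rintro T ⟨hTP, hTne⟩ ⟨hTQ, -⟩
    obtain ⟨x, hx⟩ := nonempty_iff_ne_empty.2 hTne
    have hd : Disjoint P Q := X.disjoint hP hQ hPQ
    exact Finset.disjoint_left.mp hd (hTP hx) (hTQ hx)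
  have hsum_un : ∑ S ∈ A \ content X, mu p S = ∑ P ∈ X.parts, plog p P := by
    rw [hsplit, Finset.sum_biUnion hdisj]
    refine sum_congr rfl fun P hP => ?_
    have h1 : ∑ T ∈ P.powerset, mu p T = plog p P := sum_mu_powerset p P
    have h2 : P.powerset = insert ∅ (P.powerset.filter (· ≠ ∅)) := by
      ext T
      simp only [mem_insert, mem_filter, mem_powerset]
      constructor
      · intro h
        by_cases hT : T = ∅
        · exact Or.inl hT
        · exact Or.inr ⟨h, hT⟩
      · rintro (rfl | ⟨h, -⟩)
        · exact empty_subset P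
        · exact h
    rw [h2, Finset.sum_insert (by simp), hmu_empty, zero_add] at h1
    exact h1
  have := Finset.sum_sdiff_eq_sub hcsub (f := mu p)
  rw [hsum_un, hsumA] at this
  rw [Hent, muSet]
  have : ∑ P ∈ X.parts, plog p P = - ∑ S ∈ content X, mu p S := by linarith
  simp only [plog] at this
  rw [this]
  ring

lemma crossed_of_le {W X : Finpartition (univ : Finset Ω)} (hle : W ≤ X)
    {S : Finset Ω} (h : crossed X S) : crossed W S := by
  obtain ⟨P, hP, Q, hQ, hPQ, ⟨x, hx⟩, ⟨y, hy⟩⟩ := h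
  rw [mem_inter] at hx hy
  obtain ⟨r, hr, hxr⟩ := W.exists_mem (mem_univ x)
  obtain ⟨r', hr', hyr'⟩ := W.exists_mem (mem_univ y)
  obtain ⟨c, hc, hrc⟩ := hle hr
  obtain ⟨c', hc', hrc'⟩ := hle hr'
  have ec : c = P := X.eq_of_mem_parts hc hP (hrc hxr) hx.2
  have ec' : c' = Q := X.eq_of_mem_parts hc' hQ (hrc' hyr') hy.2
  refine ⟨r, hr, r', hr', fun e => ?_, ⟨x, mem_inter.2 ⟨hx.1, hxr⟩⟩,
    ⟨y, mem_inter.2 ⟨hy.1, hyr'⟩⟩⟩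
  have hyr : y ∈ r := by rw [e]; exact hyr'
  have hyP : y ∈ P := by
    have hyc : y ∈ c := hrc hyr
    rw [ec] at hyc
    exact hyc
  exact hPQ (X.eq_of_mem_parts hP hQ hyP hy.2)

lemma content_inf (X Y : Finpartition (univ : Finset Ω)) :
    content (X ⊓ Y) = content X ∪ content Y := by
  ext S
  simp only [mem_union, mem_content]
  constructor
  · rintro ⟨hcard, hc⟩
    by_contra hcon
    push_neg at hcon
    have hSne : S.Nonempty := Finset.card_pos.1 (by omega)
    have hnX : ¬ crossed X S := fun h => hcon.1 hcard h
    have hnY : ¬ crossed Y S := fun h => hcon.2 hcard h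
    obtain ⟨P, hP, hsP⟩ := (not_crossed_iff hSne).1 hnX
    obtain ⟨Q, hQ, hsQ⟩ := (not_crossed_iff hSne).1 hnY
    obtain ⟨r, hr, r', hr', hrr', ⟨x, hx⟩, ⟨y, hy⟩⟩ := hc
    rw [mem_inter] at hx hy
    have hrpq : ∀ t ∈ (X ⊓ Y).parts, ∀ z ∈ S, z ∈ t → t = P ∩ Q := by
      intro t ht z hzS hzt
      rw [Finpartition.parts_inf, mem_erase, mem_image] at ht
      obtain ⟨htne, ⟨⟨P1, Q1⟩, hm, rfl⟩⟩ := ht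
      rw [mem_product] at hm
      have hz1 : z ∈ P1 ∩ Q1 := hzt
      rw [mem_inter] at hz1
      have e1 : P1 = P := X.eq_of_mem_parts hm.1 hP hz1.1 (hsP hzS)
      have e2 : Q1 = Q := Y.eq_of_mem_parts hm.2 hQ hz1.2 (hsQ hzS)
      show P1 ⊓ Q1 = P ∩ Q
      rw [e1, e2]; rfl
    exact hrr' ((hrpq r hr x hx.1 hx.2).trans (hrpq r' hr' y hy.1 hy.2).symm)
  · rintro (⟨hcard, hc⟩ | ⟨hcard, hc⟩)
    · refine ⟨hcard, ?_⟩
      exact crossed_of_le inf_le_left hc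
    · refine ⟨hcard, ?_⟩
      exact crossed_of_le inf_le_right hc


end aux

theorem condEntropy_eq_muSet_sdiff {Ω : Type*} [Fintype Ω] [DecidableEq Ω] (p : Ω → ℝ)
    (hp : ∀ ω, 0 ≤ p ω) (hsum : ∑ ω, p ω = 1)
    (X Y : Finpartition (univ : Finset Ω)) :
    Hent p (X ⊓ Y) - Hent p Y = muSet p (content X \ content Y) := by
  rw [Hent_eq_muSet_content p hsum, Hent_eq_muSet_content p hsum, content_inf]
  rw [muSet, muSet, muSet, ← Finset.union_sdiff_right,
    Finset.sum_sdiff_eq_sub subset_union_right]
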